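/- Let n ≥ 4 be even. For all g = (a,b), h = (c,d) ∈ ℤ₂×ℤ₂ and 1 ≤ p < q ≤ n/2, the twisted string order parameter acts on the cyclic cluster state by the twist phase: T_{[p,q]}^{(g,h)} |C_n⟩ = (−1)^{ad−bc} |C_n⟩. Consequently, for n divisible by 6 and distinct nontrivial g, h ∈ ℤ₂×ℤ₂, the cluster state wins the triangle game with certainty: P_n^{(Q)}(g,h | |C_n⟩⟨C_n|) = 1. -/

import Mathlib

open Matrix Complex
open scoped ComplexOrder

noncomputable section

/-- The state space of `n` qubits, as functions on classical bit strings. -/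
abbrev QState (n : ℕ) := (Fin n → Fin 2) → ℂ

/-- Operators on `n` qubits: `2^n × 2^n` complex matrices. -/
abbrev Op (n : ℕ) := Matrix (Fin n → Fin 2) (Fin n → Fin 2) ℂ

/-- The single-qubit Pauli `X` matrix. -/
def Xmat : Matrix (Fin 2) (Fin 2) ℂ := !![0, 1; 1, 0]

/-- The single-qubit Pauli `Z` matrix. -/
def Zmat : Matrix (Fin 2) (Fin 2) ℂ := !![1, 0; 0, -1]

/-- Map a 1-based cyclic site label `j ∈ {1,…,n}` (taken mod `n`) to an index in `Fin n`. -/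
def site (n : ℕ) [NeZero n] (j : ℕ) : Fin n :=
  ⟨(j + (n - 1)) % n, Nat.mod_lt _ (Nat.pos_of_ne_zero (NeZero.ne n))⟩

/-- The operator acting as the single-qubit matrix `M` on qubit `i` and as identity elsewhere. -/
def onSite (n : ℕ) (i : Fin n) (M : Matrix (Fin 2) (Fin 2) ℂ) : Op n :=
  Matrix.of fun s t => (if ∀ k, k ≠ i → s k = t k then 1 else 0) * M (s i) (t i)

/-- Pauli `X` on (1-based, cyclic) site `j`. -/
def PX (n : ℕ) [NeZero n] (j : ℕ) : Op n := onSite n (site n j) Xmat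

/-- Pauli `Z` on (1-based, cyclic) site `j`. -/
def PZ (n : ℕ) [NeZero n] (j : ℕ) : Op n := onSite n (site n j) Zmat

/-- The cyclic cluster stabilizer `K_j = Z_{j-1} X_j Z_{j+1}` (for `1 ≤ j ≤ n`). -/
def Kstab (n : ℕ) [NeZero n] (j : ℕ) : Op n := PZ n (j - 1) * PX n j * PZ n (j + 1)

/-- The symmetry group `ℤ₂ × ℤ₂`. -/
abbrev G2 := ZMod 2 × ZMod 2

/-- The nontrivial element `x = (0,1)` of `ℤ₂ × ℤ₂`. -/
def gx : G2 := (0, 1)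

/-- The nontrivial element `y = (1,0)` of `ℤ₂ × ℤ₂`. -/
def gy : G2 := (1, 0)

/-- The nontrivial element `z = (1,1)` of `ℤ₂ × ℤ₂`. -/
def gz : G2 := (1, 1)

/-- The global symmetry representation `U((a,b)) = ∏_{j odd} X_j^a ∏_{j even} X_j^b`
on `n` qubits (`n` even), written as a product over the `n/2` two-site blocks. -/
def Usym (n : ℕ) [NeZero n] (g : G2) : Op n :=
  ((List.range (n / 2)).map
    (fun p => PX n (2 * p + 1) ^ g.1.val * PX n (2 * p + 2) ^ g.2.val)).prod

/-- Left boundary operator `V^L_p((a,b))`: `Z^b` on qubit `2p-1` and `X^b Z^a` on qubit `2p`. -/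
def VL (n : ℕ) [NeZero n] (p : ℕ) (g : G2) : Op n :=
  PZ n (2 * p - 1) ^ g.2.val * (PX n (2 * p) ^ g.2.val * PZ n (2 * p) ^ g.1.val)

/-- Right boundary operator `V^R_p((a,b))`: `Z^b X^a` on qubit `2p-1` and `Z^a` on qubit `2p`. -/
def VR (n : ℕ) [NeZero n] (p : ℕ) (g : G2) : Op n :=
  (PZ n (2 * p - 1) ^ g.2.val * PX n (2 * p - 1) ^ g.1.val) * PZ n (2 * p) ^ g.1.val

/-- Truncated symmetry `U_{[p,q]}((a,b)) = ∏_{r=p+1}^{q-1} X_{2r-1}^a X_{2r}^b`. -/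
def Ustr (n : ℕ) [NeZero n] (p q : ℕ) (g : G2) : Op n :=
  ((List.range (q - (p + 1))).map
    (fun r => PX n (2 * (p + 1 + r) - 1) ^ g.1.val * PX n (2 * (p + 1 + r)) ^ g.2.val)).prod

/-- The string order parameter `S_{[p,q]}(g) = V^L_p(g) · U_{[p,q]}(g) · V^R_q(g)`. -/
def SOPm (n : ℕ) [NeZero n] (p q : ℕ) (g : G2) : Op n :=
  VL n p g * Ustr n p q g * VR n q g

/-- The twisted string order parameter
`T_{[p,q]}^{(g,h)} = V^R_q(g) · U(h) · V^L_p(g) · U_{[p,q]}(g)`. -/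
def TSOP (n : ℕ) [NeZero n] (p q : ℕ) (g h : G2) : Op n :=
  VR n q g * Usym n h * VL n p g * Ustr n p q g

/-- The triangle-game winning operator
`O_{g,h} = (1/32)(12·1 + 12 U(g) + U(h) + U(gh) − 3T − 3U(g)T)` with `T = T_{[1,n/6+1]}^{(g,h)}`. -/
def Owin (n : ℕ) [NeZero n] (g h : G2) : Op n :=
  (32 : ℂ)⁻¹ • (12 • (1 : Op n) + 12 • Usym n g + Usym n h + Usym n (g + h)
    - 3 • TSOP n 1 (n / 6 + 1) g h - 3 • (Usym n g * TSOP n 1 (n / 6 + 1) g h))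

/-- The `n`-fold tensor product `|+⟩^{⊗n}`, with all amplitudes `(1/√2)^n`. -/
def plusState (n : ℕ) : QState n := fun _ => (((Real.sqrt 2)⁻¹ : ℝ) : ℂ) ^ n

/-- The controlled-`Z` gate between (1-based, cyclic) sites `j` and `k`. -/
def CZm (n : ℕ) [NeZero n] (j k : ℕ) : Op n :=
  Matrix.of fun s t =>
    if s = t then (if s (site n j) = 1 ∧ s (site n k) = 1 then -1 else 1) else 0

/-- The `n`-qubit cyclic cluster state `|C_n⟩ = (∏_{j=1}^n CZ_{j,j+1}) |+⟩^{⊗n}`. -/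
def cluster (n : ℕ) [NeZero n] : QState n :=
  (((List.range n).map (fun j => CZm n (j + 1) (j + 2))).prod).mulVec (plusState n)

set_option linter.unusedSectionVars false
namespace CP

def χ (e : Fin 2) : ℂ := (-1 : ℂ) ^ e.val

lemma χ_add (e f : Fin 2) : χ (e + f) = χ e * χ f := by
  fin_cases e <;> fin_cases f <;> simp [χ] <;> norm_num

lemma χ_zero : χ 0 = 1 := rfl

lemma χ_sum {α : Type*} (s : Finset α) (f : α → Fin 2) :
    ∏ i ∈ s, χ (f i) = χ (∑ i ∈ s, f i) := by
  induction s using Finset.cons_induction with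
  | empty => simp [χ_zero]
  | cons a s ha ih => rw [Finset.prod_cons, Finset.sum_cons, χ_add, ih]

def zf (z : ZMod 2) : Fin 2 := z

lemma zmod2_cases (z : ZMod 2) : z = 0 ∨ z = 1 := by revert z; decide

variable {n : ℕ} [NeZero n]

lemma add_eval (f g : Fin n → Fin 2) (k : Fin n) : (f + g) k = f k + g k := rfl

lemma site_val (j : ℕ) (h1 : 1 ≤ j) (h2 : j ≤ n) : (site n j).val = j - 1 := by
  have hn : 0 < n := Nat.pos_of_ne_zero (NeZero.ne n)
  show (j + (n-1)) % n = j - 1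
  have : j + (n - 1) = (j - 1) + n := by omega
  rw [this, Nat.add_mod_right, Nat.mod_eq_of_lt (by omega)]

lemma site_succ (j : ℕ) : site n (j+1) = site n j + 1 := by
  have hn : 0 < n := Nat.pos_of_ne_zero (NeZero.ne n)
  apply Fin.ext
  rw [Fin.add_def]
  show (j + 1 + (n-1)) % n = ((j + (n-1)) % n + (1 % n)) % n
  conv_rhs => rw [← Nat.add_mod]
  congr 1; omega

open Fin.CommRing in
lemma site_pred (j : ℕ) (hj : 1 ≤ j) : site n j - 1 = site n (j - 1) := by
  have := site_succ (n := n) (j - 1)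
  rw [Nat.sub_add_cancel hj] at this
  rw [this]; ring

lemma site_inj (j k : ℕ) (hj1 : 1 ≤ j) (hj2 : j ≤ n) (hk1 : 1 ≤ k) (hk2 : k ≤ n) :
    site n j = site n k ↔ j = k := by
  constructor
  · intro h
    have := congrArg Fin.val h
    rw [site_val j hj1 hj2, site_val k hk1 hk2] at this
    omega
  · rintro rfl; rfl

lemma site_period (j : ℕ) : site n (j + n) = site n j := by
  apply Fin.ext
  show (j + n + (n-1)) % n = (j + (n-1)) % n
  have : j + n + (n - 1) = (j + (n-1)) + n := by omega
  rw [this, Nat.add_mod_right]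

lemma site_zero : site n 0 = site n n := by
  have := site_period (n := n) 0
  simpa using this.symm

lemma CZm_mulVec (j k : ℕ) (v : QState n) (s : Fin n → Fin 2) :
    (CZm n j k).mulVec v s
      = (if s (site n j) = 1 ∧ s (site n k) = 1 then (-1:ℂ) else 1) * v s := by
  unfold CZm Matrix.mulVec dotProduct
  simp [ite_mul, Finset.sum_ite_eq]

lemma Xmat_apply (u t : Fin 2) : Xmat u t = if t = u + 1 then 1 else 0 := by
  fin_cases u <;> fin_cases t <;> simp [Xmat]

lemma Zmat_apply (u t : Fin 2) : Zmat u t = if t = u then χ u else 0 := by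
  fin_cases u <;> fin_cases t <;> simp [Zmat, χ]

lemma addSingle_apply (s : Fin n → Fin 2) (i k : Fin n) (e : Fin 2) :
    (s + Pi.single i e : Fin n → Fin 2) k = s k + if k = i then e else 0 := by
  simp [Pi.single_apply]

lemma addSingle_ne (s : Fin n → Fin 2) {i k : Fin n} (e : Fin 2) (h : k ≠ i) :
    (s + Pi.single i e : Fin n → Fin 2) k = s k := by
  simp [addSingle_apply, h]

lemma addSingle_self (s : Fin n → Fin 2) (i : Fin n) (e : Fin 2) :
    (s + Pi.single i e : Fin n → Fin 2) i = s i + e := by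
  simp [addSingle_apply]

lemma PX_entry (j : ℕ) (s t : Fin n → Fin 2) :
    PX n j s t = if t = s + Pi.single (site n j) 1 then 1 else 0 := by
  set i := site n j
  show (if ∀ k, k ≠ i → s k = t k then 1 else 0) * Xmat (s i) (t i) = _
  rw [Xmat_apply]
  by_cases h : t = s + Pi.single i 1
  · subst h
    have h1 : ∀ k, k ≠ i → s k = (s + Pi.single i 1 : Fin n → Fin 2) k := fun k hk =>
      (addSingle_ne s 1 hk).symm
    have h2 : (s + Pi.single i 1 : Fin n → Fin 2) i = s i + 1 := addSingle_self s i 1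
    rw [if_pos h1, if_pos rfl, if_pos h2, one_mul]
  · rw [if_neg h]
    rcases Classical.em (∀ k, k ≠ i → s k = t k) with hc | hc
    · have hti : ¬ (t i = s i + 1) := by
        intro hti
        apply h
        funext k
        by_cases hk : k = i
        · subst hk; rw [addSingle_self]; exact hti
        · rw [addSingle_ne s 1 hk]; exact (hc k hk).symm
      rw [if_pos hc, if_neg hti, one_mul]
    · rw [if_neg hc, zero_mul]

lemma PZ_entry (j : ℕ) (s t : Fin n → Fin 2) :
    PZ n j s t = if t = s then χ (s (site n j)) else 0 := by
  set i := site n j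
  show (if ∀ k, k ≠ i → s k = t k then 1 else 0) * Zmat (s i) (t i) = _
  rw [Zmat_apply]
  by_cases h : t = s
  · subst h; simp
  · rw [if_neg h]
    rcases Classical.em (∀ k, k ≠ i → s k = t k) with hc | hc
    · have hti : ¬ (t i = s i) := fun hti =>
        h (funext fun k => by
          by_cases hk : k = i
          · subst hk; exact hti
          · exact (hc k hk).symm)
      rw [if_pos hc, if_neg hti, one_mul]
    · rw [if_neg hc, zero_mul]

lemma PX_mulVec (j : ℕ) (v : QState n) (s : Fin n → Fin 2) :
    (PX n j).mulVec v s = v (s + Pi.single (site n j) 1) := by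
  unfold Matrix.mulVec dotProduct
  simp only [PX_entry, ite_mul, one_mul, zero_mul]
  rw [Finset.sum_ite_eq' Finset.univ (s + Pi.single (site n j) 1) v]
  simp

lemma PZ_mulVec (j : ℕ) (v : QState n) (s : Fin n → Fin 2) :
    (PZ n j).mulVec v s = χ (s (site n j)) * v s := by
  unfold Matrix.mulVec dotProduct
  simp only [PZ_entry, ite_mul, zero_mul]
  rw [Finset.sum_ite_eq' Finset.univ s (fun t => χ (s (site n j)) * v t)]
  simp

lemma PX_pow_mulVec (j : ℕ) (z : ZMod 2) (v : QState n) (s : Fin n → Fin 2) :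
    (PX n j ^ z.val).mulVec v s = v (s + Pi.single (site n j) (zf z)) := by
  rcases (show z = 0 ∨ z = 1 by revert z; decide) with rfl | rfl
  · show (PX n j ^ 0).mulVec v s = v (s + Pi.single (site n j) 0)
    simp [Matrix.one_mulVec]
    congr 1; funext k; simp [Pi.single_apply]
  · show (PX n j ^ 1).mulVec v s = _
    rw [pow_one, PX_mulVec]
    rfl

lemma PZ_pow_mulVec (j : ℕ) (z : ZMod 2) (v : QState n) (s : Fin n → Fin 2) :
    (PZ n j ^ z.val).mulVec v s = χ ((zf z) * s (site n j)) * v s := by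
  rcases (show z = 0 ∨ z = 1 by revert z; decide) with rfl | rfl
  · show (PZ n j ^ 0).mulVec v s = χ ((0 : Fin 2) * s (site n j)) * v s
    simp [Matrix.one_mulVec, χ]
  · show (PZ n j ^ 1).mulVec v s = χ ((1 : Fin 2) * s (site n j)) * v s
    rw [pow_one, PZ_mulVec, one_mul]

lemma prod_shift_mulVec {α : Type*} (L : List α) (f : α → Op n) (t : α → (Fin n → Fin 2))
    (hf : ∀ a v s, (f a).mulVec v s = v (s + t a)) (v : QState n) (s : Fin n → Fin 2) :
    ((L.map f).prod).mulVec v s = v (s + (L.map t).sum) := by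
  induction L generalizing s with
  | nil => simp [Matrix.one_mulVec]
  | cons a L ih =>
    rw [List.map_cons, List.prod_cons, ← Matrix.mulVec_mulVec, hf, ih]
    rw [List.map_cons, List.sum_cons, add_assoc]

def Esum (n : ℕ) [NeZero n] (s : Fin n → Fin 2) : Fin 2 := ∑ i : Fin n, s i * s (i + 1)

lemma prodCZ_mulVec (L : List ℕ) (v : QState n) (s : Fin n → Fin 2) :
    (((L.map (fun j => CZm n (j+1) (j+2))).prod).mulVec v) s
      = (L.map (fun j =>
          if s (site n (j+1)) = 1 ∧ s (site n (j+2)) = 1 then (-1:ℂ) else 1)).prod * v s := by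
  induction L with
  | nil => simp [Matrix.one_mulVec]
  | cons a L ih =>
    rw [List.map_cons, List.prod_cons, ← Matrix.mulVec_mulVec, CZm_mulVec,
      ih, List.map_cons, List.prod_cons]
    ring

lemma cluster_apply (s : Fin n → Fin 2) :
    cluster n s = χ (Esum n s) * (((Real.sqrt 2)⁻¹ : ℝ) : ℂ) ^ n := by
  unfold cluster
  rw [prodCZ_mulVec]
  congr 1
  have h1 : ∀ j : ℕ, (if s (site n (j+1)) = 1 ∧ s (site n (j+2)) = 1 then (-1:ℂ) else 1)
      = χ (s (site n (j+1)) * s (site n (j+2))) := by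
    intro j
    have : ∀ u w : Fin 2, (if u = 1 ∧ w = 1 then (-1:ℂ) else 1) = χ (u * w) := by
      intro u w; fin_cases u <;> fin_cases w <;> simp [χ]
    exact this _ _
  have h2 : ∀ i : Fin n, s i * s (i + 1)
      = s (site n (i.val+1)) * s (site n (i.val+2)) := by
    intro i
    have e1 : site n (i.val+1) = i := by
      apply Fin.ext
      rw [site_val (i.val+1) (by omega) (by omega)]
      simp
    have e2 : site n (i.val+2) = i + 1 := by
      have := site_succ (n := n) (i.val+1)
      rw [e1] at this
      exact this
    rw [e1, e2]
  calc (List.map (fun j =>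
          if s (site n (j+1)) = 1 ∧ s (site n (j+2)) = 1 then (-1:ℂ) else 1) (List.range n)).prod
      = ∏ j ∈ Finset.range n, χ (s (site n (j+1)) * s (site n (j+2))) := by
        simp only [h1]; rfl
    _ = χ (∑ j ∈ Finset.range n, s (site n (j+1)) * s (site n (j+2))) := χ_sum _ _
    _ = χ (Esum n s) := by
        congr 1
        unfold Esum
        rw [← Fin.sum_univ_eq_sum_range (fun j => s (site n (j+1)) * s (site n (j+2)))]
        exact Finset.sum_congr rfl (fun i _ => (h2 i).symm)

lemma fin_one_ne_zero (hn : 2 ≤ n) : (1 : Fin n) ≠ 0 := by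
  intro h
  have h2 := congrArg Fin.val h
  rw [Fin.val_one', Fin.val_zero, Nat.mod_eq_of_lt hn] at h2
  exact one_ne_zero h2

open Fin.CommRing in
lemma Esum_flip (hn : 2 ≤ n) (s : Fin n → Fin 2) (i : Fin n) (e : Fin 2) :
    Esum n (s + Pi.single i e) = Esum n s + e * (s (i - 1) + s (i + 1)) := by
  have h10 : (1 : Fin n) ≠ 0 := fin_one_ne_zero hn
  have him : i - 1 ≠ i := by
    intro h
    exact h10 (by have := sub_eq_self.mp h; simpa using this)
  have hip : i + 1 ≠ i := by
    intro h
    apply h10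
    have h2 : i + 1 = i + 0 := by rw [h, add_zero]
    exact add_left_cancel h2
  have key : ∀ k : Fin n, (s + Pi.single i e : Fin n → Fin 2) k * (s + Pi.single i e : Fin n → Fin 2) (k + 1)
      = s k * s (k+1) + ((if k = i - 1 then e * s (i-1) else 0) + (if k = i then e * s (i+1) else 0)) := by
    intro k
    by_cases hk : k = i
    · subst hk
      rw [if_neg (by intro h; exact him (h ▸ rfl) ), if_pos rfl]
      rw [addSingle_self, addSingle_ne s e hip]
      ring
    · by_cases hk1 : k = i - 1
      · subst hk1
        rw [if_pos rfl, if_neg hk]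
        rw [addSingle_ne s e hk]
        have : i - 1 + 1 = i := by ring
        rw [this, addSingle_self]
        ring
      · rw [if_neg hk1, if_neg hk]
        rw [addSingle_ne s e hk, addSingle_ne s e (by
          intro h
          apply hk1
          have : k = i - 1 := by rw [← h]; ring
          exact this)]
        ring
  unfold Esum
  rw [Finset.sum_congr rfl (fun k _ => key k)]
  rw [Finset.sum_add_distrib, Finset.sum_add_distrib]
  rw [Finset.sum_ite_eq' Finset.univ (i-1) (fun _ => e * s (i-1))]
  rw [Finset.sum_ite_eq' Finset.univ i (fun _ => e * s (i+1))]
  simp only [Finset.mem_univ, if_pos]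
  ring

lemma cluster_flip (hn : 2 ≤ n) (s : Fin n → Fin 2) (i : Fin n) (e : Fin 2) :
    cluster n (s + Pi.single i e) = χ (e * (s (i - 1) + s (i + 1))) * cluster n s := by
  rw [cluster_apply, cluster_apply, Esum_flip hn, χ_add]
  ring

def FU (n : ℕ) [NeZero n] (u w : Fin 2) (m : ℕ) : Fin n → Fin 2 :=
  ((List.range m).map
    (fun p => Pi.single (site n (2*p+1)) u + Pi.single (site n (2*p+2)) w)).sum

lemma FU_succ (u w : Fin 2) (m : ℕ) :
    FU n u w (m+1) = FU n u w m
      + (Pi.single (site n (2*m+1)) u + Pi.single (site n (2*m+2)) w) := by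
  unfold FU
  rw [List.range_succ, List.map_append, List.sum_append]
  simp

lemma FU_eval (u w : Fin 2) (m : ℕ) (hm : 2*m ≤ n) (k : ℕ) (hk1 : 1 ≤ k) (hk2 : k ≤ n) :
    FU n u w m (site n k) = if k ≤ 2*m then (if k % 2 = 1 then u else w) else 0 := by
  induction m with
  | zero =>
    rw [if_neg (by omega)]
    rfl
  | succ m ih =>
    rw [FU_succ]
    rw [add_eval, add_eval, ih (by omega)]
    rw [Pi.single_apply, Pi.single_apply]
    simp only [site_inj k (2*m+1) hk1 hk2 (by omega) (by omega),
      site_inj k (2*m+2) hk1 hk2 (by omega) (by omega)]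
    split_ifs <;> first | omega | simp

lemma clusterFU_aux (hn4 : 4 ≤ n) (u w : Fin 2) (m : ℕ) (hm : 2*m + 2 ≤ n)
    (s : Fin n → Fin 2) :
    cluster n (s + FU n u w m)
      = χ (u * s (site n 0) + w * s (site n 1) + u * s (site n (2*m)) + w * s (site n (2*m+1))
          + (if m = 0 then 0 else u*w)) * cluster n s := by
  have hn2 : 2 ≤ n := by omega
  induction m with
  | zero =>
    have hFU : FU n u w 0 = 0 := rfl
    rw [hFU, add_zero, if_pos rfl]
    have key : ∀ u w x y : Fin 2, u * x + w * y + u * x + w * y + 0 = 0 := by decide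
    have : u * s (site n 0) + w * s (site n 1) + u * s (site n (2*0)) + w * s (site n (2*0+1)) + 0
        = 0 := key u w _ _
    rw [this]
    show cluster n s = 1 * cluster n s
    rw [one_mul]
  | succ m ih =>
    have hm' : 2*m + 2 ≤ n := by omega
    have ihm := ih hm'
    set s1 := s + FU n u w m with hs1
    have hstep : s + FU n u w (m+1)
        = (s1 + Pi.single (site n (2*m+1)) u) + Pi.single (site n (2*m+2)) w := by
      rw [FU_succ, hs1, ← add_assoc, ← add_assoc]
    rw [hstep]
    set s2 := s1 + Pi.single (site n (2*m+1)) u with hs2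
    rw [cluster_flip hn2, hs2, cluster_flip hn2, ← hs2, ihm]
    have r1 : site n (2*m+2) - 1 = site n (2*m+1) := by
      rw [site_pred _ (by omega), show 2*m+2-1 = 2*m+1 from by omega]
    have r2 : site n (2*m+2) + 1 = site n (2*m+3) := by
      have := site_succ (n := n) (2*m+2)
      rw [show 2*m+2+1 = 2*m+3 by omega] at this
      exact this.symm
    have r3 : site n (2*m+1) - 1 = site n (2*m) := by
      rw [site_pred _ (by omega), show 2*m+1-1 = 2*m from by omega]
    have r4 : site n (2*m+1) + 1 = site n (2*m+2) := by
      have := site_succ (n := n) (2*m+1)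
      rw [show 2*m+1+1 = 2*m+2 by omega] at this
      exact this.symm
    have e1 : s2 (site n (2*m+1)) = s (site n (2*m+1)) + u := by
      rw [hs2, addSingle_self, hs1, add_eval,
        FU_eval u w m (by omega) (2*m+1) (by omega) (by omega), if_neg (by omega), add_zero]
    have e2 : s2 (site n (2*m+3)) = s (site n (2*m+3)) := by
      rw [hs2, addSingle_ne _ _ (by
        rw [Ne, site_inj (2*m+3) (2*m+1) (by omega) (by omega) (by omega) (by omega)]; omega),
        hs1, add_eval, FU_eval u w m (by omega) (2*m+3) (by omega) (by omega),
        if_neg (by omega), add_zero]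
    have e3 : s1 (site n (2*m)) = s (site n (2*m)) + (if m = 0 then 0 else w) := by
      rcases Nat.eq_zero_or_pos m with hm0 | hm0
      · subst hm0
        rw [if_pos rfl, hs1, add_eval]
        rw [show (2*0 : ℕ) = 0 from rfl, site_zero,
          FU_eval u w 0 (by omega) n (by omega) (by omega), if_neg (by omega)]
      · rw [if_neg (by omega), hs1, add_eval,
          FU_eval u w m (by omega) (2*m) (by omega) (by omega), if_pos (by omega),
          if_neg (by omega)]
    have e4 : s1 (site n (2*m+2)) = s (site n (2*m+2)) := by
      rw [hs1, add_eval, FU_eval u w m (by omega) (2*m+2) (by omega) (by omega),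
        if_neg (by omega), add_zero]
    rw [r1, r2, r3, r4, e1, e2, e3, e4]
    rw [show (2*(m+1) : ℕ) = 2*m+2 by omega, show (2*m+2+1 : ℕ) = 2*m+3 by omega,
      if_neg (Nat.succ_ne_zero m)]
    rw [← mul_assoc, ← mul_assoc, ← χ_add, ← χ_add]
    congr 2
    have key0 : ∀ u w x0 x1 xa xb xc xd : Fin 2,
        w * (xb + u + xd) + u * (xa + 0 + xc) + (u * x0 + w * x1 + u * xa + w * xb + 0)
          = u * x0 + w * x1 + u * xc + w * xd + u * w := by decide
    have key1 : ∀ u w x0 x1 xa xb xc xd : Fin 2,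
        w * (xb + u + xd) + u * (xa + w + xc) + (u * x0 + w * x1 + u * xa + w * xb + u * w)
          = u * x0 + w * x1 + u * xc + w * xd + u * w := by decide
    by_cases hm0 : m = 0
    · simp only [if_pos hm0]
      exact key0 u w _ _ _ _ _ _
    · simp only [if_neg hm0]
      exact key1 u w _ _ _ _ _ _

lemma clusterFU_full (hn4 : 4 ≤ n) (hev : Even n) (u w : Fin 2) (s : Fin n → Fin 2) :
    cluster n (s + FU n u w (n/2)) = cluster n s := by
  have hn2 : 2 ≤ n := by omega
  obtain ⟨K, hK⟩ := hev
  set m := n/2 - 1 with hmdef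
  have h2m : 2*m + 2 = n := by omega
  have hm1 : 1 ≤ m := by omega
  have hsplit : n/2 = m + 1 := by omega
  rw [hsplit, FU_succ, ← add_assoc, ← add_assoc]
  set s1 := s + FU n u w m with hs1
  set s2 := s1 + Pi.single (site n (2*m+1)) u with hs2
  rw [cluster_flip hn2, hs2, cluster_flip hn2, ← hs2, clusterFU_aux hn4 u w m (by omega) s]
  have r1 : site n (2*m+2) - 1 = site n (2*m+1) := by
    rw [site_pred _ (by omega), show 2*m+2-1 = 2*m+1 from by omega]
  have r2 : site n (2*m+2) + 1 = site n 1 := by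
    have h := site_succ (n := n) (2*m+2)
    rw [show 2*m+2+1 = 1 + n from by omega, site_period 1] at h
    exact h.symm
  have r3 : site n (2*m+1) - 1 = site n (2*m) := by
    rw [site_pred _ (by omega), show 2*m+1-1 = 2*m from by omega]
  have r4 : site n (2*m+1) + 1 = site n (2*m+2) := by
    have h := site_succ (n := n) (2*m+1)
    rw [show 2*m+1+1 = 2*m+2 from by omega] at h
    exact h.symm
  have e1 : s2 (site n (2*m+1)) = s (site n (2*m+1)) + u := by
    rw [hs2, addSingle_self, hs1, add_eval,
      FU_eval u w m (by omega) (2*m+1) (by omega) (by omega), if_neg (by omega), add_zero]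
  have e2 : s2 (site n 1) = s (site n 1) + u := by
    rw [hs2, addSingle_ne _ _ (by
      rw [Ne, site_inj 1 (2*m+1) (by omega) (by omega) (by omega) (by omega)]; omega),
      hs1, add_eval, FU_eval u w m (by omega) 1 (by omega) (by omega),
      if_pos (by omega), if_pos (by omega)]
  have e3 : s1 (site n (2*m)) = s (site n (2*m)) + w := by
    rw [hs1, add_eval, FU_eval u w m (by omega) (2*m) (by omega) (by omega),
      if_pos (by omega), if_neg (by omega)]
  have e4 : s1 (site n (2*m+2)) = s (site n n) := by
    rw [hs1, add_eval, show (2*m+2 : ℕ) = n from h2m,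
      FU_eval u w m (by omega) n (by omega) (by omega), if_neg (by omega), add_zero]
  rw [r1, r2, r3, r4, e1, e2, e3, e4, if_neg (by omega : ¬ m = 0), site_zero]
  have key : ∀ u w x1 xa xb xn : Fin 2,
      (w * (xb + u + (x1 + u)) + u * (xa + w + xn)) + (u * xn + w * x1 + u * xa + w * xb + u * w)
        = 0 := by decide
  rw [← mul_assoc, ← mul_assoc, ← χ_add, ← χ_add,
    key u w (s (site n 1)) (s (site n (2*m))) (s (site n (2*m+1))) (s (site n n)), χ_zero, one_mul]

def HS (n : ℕ) [NeZero n] (a b : Fin 2) (p m : ℕ) : Fin n → Fin 2 :=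
  Pi.single (site n (2*p)) b +
  ((List.range m).map
    (fun r => Pi.single (site n (2*(p+1+r)-1)) a + Pi.single (site n (2*(p+1+r))) b)).sum

lemma HS_succ (a b : Fin 2) (p m : ℕ) :
    HS n a b p (m+1) = HS n a b p m
      + (Pi.single (site n (2*p+2*m+1)) a + Pi.single (site n (2*p+2*m+2)) b) := by
  unfold HS
  rw [List.range_succ, List.map_append, List.sum_append]
  simp only [List.map_cons, List.map_nil, List.sum_cons, List.sum_nil, add_zero]
  rw [show 2*(p+1+m)-1 = 2*p+2*m+1 from by omega, show 2*(p+1+m) = 2*p+2*m+2 from by omega,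
    ← add_assoc]

lemma HS_eval (a b : Fin 2) (p m : ℕ) (hp : 1 ≤ p) (hm : 2*p + 2*m ≤ n)
    (k : ℕ) (hk1 : 1 ≤ k) (hk2 : k ≤ n) :
    HS n a b p m (site n k)
      = if 2*p ≤ k ∧ k ≤ 2*p + 2*m then (if k % 2 = 1 then a else b) else 0 := by
  induction m with
  | zero =>
    show (Pi.single (site n (2*p)) b + 0 : Fin n → Fin 2) (site n k) = _
    rw [add_eval, Pi.single_apply]
    simp only [site_inj k (2*p) hk1 hk2 (by omega) (by omega)]
    have : (0 : Fin n → Fin 2) (site n k) = 0 := rfl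
    rw [this]
    split_ifs <;> first | omega | simp
  | succ m ih =>
    rw [HS_succ, add_eval, add_eval, ih (by omega), Pi.single_apply, Pi.single_apply]
    simp only [site_inj k (2*p+2*m+1) hk1 hk2 (by omega) (by omega),
      site_inj k (2*p+2*m+2) hk1 hk2 (by omega) (by omega)]
    split_ifs <;> first | omega | simp

lemma clusterHS_aux (a b : Fin 2) (p m : ℕ) (hp : 1 ≤ p) (hm : 2*p + 2*m + 2 ≤ n)
    (s : Fin n → Fin 2) :
    cluster n (s + HS n a b p m)
      = χ (b * s (site n (2*p-1)) +
          (if m = 0 then b * s (site n (2*p+1))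
           else a * s (site n (2*p)) + a * s (site n (2*p+2*m)) + b * s (site n (2*p+2*m+1))))
        * cluster n s := by
  have hn2 : 2 ≤ n := by omega
  induction m with
  | zero =>
    have h0 : HS n a b p 0 = Pi.single (site n (2*p)) b := by
      unfold HS; simp
    rw [h0, cluster_flip hn2, if_pos rfl]
    rw [site_pred _ (by omega), show 2*p-1 = 2*p-1 from rfl]
    have r : site n (2*p) + 1 = site n (2*p+1) := (site_succ _).symm
    rw [r]
    rw [mul_add]
  | succ m ih =>
    have ihm := ih (by omega)
    set s1 := s + HS n a b p m with hs1
    have hstep : s + HS n a b p (m+1)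
        = (s1 + Pi.single (site n (2*p+2*m+1)) a) + Pi.single (site n (2*p+2*m+2)) b := by
      rw [HS_succ, hs1, ← add_assoc, ← add_assoc]
    rw [hstep]
    set s2 := s1 + Pi.single (site n (2*p+2*m+1)) a with hs2
    rw [cluster_flip hn2, hs2, cluster_flip hn2, ← hs2, ihm]
    have r1 : site n (2*p+2*m+2) - 1 = site n (2*p+2*m+1) := by
      rw [site_pred _ (by omega), show 2*p+2*m+2-1 = 2*p+2*m+1 from by omega]
    have r2 : site n (2*p+2*m+2) + 1 = site n (2*p+2*m+3) := by
      have h := site_succ (n := n) (2*p+2*m+2)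
      rw [show 2*p+2*m+2+1 = 2*p+2*m+3 from by omega] at h
      exact h.symm
    have r3 : site n (2*p+2*m+1) - 1 = site n (2*p+2*m) := by
      rw [site_pred _ (by omega), show 2*p+2*m+1-1 = 2*p+2*m from by omega]
    have r4 : site n (2*p+2*m+1) + 1 = site n (2*p+2*m+2) := by
      have h := site_succ (n := n) (2*p+2*m+1)
      rw [show 2*p+2*m+1+1 = 2*p+2*m+2 from by omega] at h
      exact h.symm
    have e1 : s2 (site n (2*p+2*m+1)) = s (site n (2*p+2*m+1)) + a := by
      rw [hs2, addSingle_self, hs1, add_eval,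
        HS_eval a b p m hp (by omega) (2*p+2*m+1) (by omega) (by omega),
        if_neg (by omega), add_zero]
    have e2 : s2 (site n (2*p+2*m+3)) = s (site n (2*p+2*m+3)) := by
      rw [hs2, addSingle_ne _ _ (by
        rw [Ne, site_inj (2*p+2*m+3) (2*p+2*m+1) (by omega) (by omega) (by omega) (by omega)]
        omega),
        hs1, add_eval, HS_eval a b p m hp (by omega) (2*p+2*m+3) (by omega) (by omega),
        if_neg (by omega), add_zero]
    have e3 : s1 (site n (2*p+2*m)) = s (site n (2*p+2*m)) + b := by
      rw [hs1, add_eval, HS_eval a b p m hp (by omega) (2*p+2*m) (by omega) (by omega),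
        if_pos (by omega), if_neg (by omega : ¬ (2*p+2*m) % 2 = 1)]
    have e4 : s1 (site n (2*p+2*m+2)) = s (site n (2*p+2*m+2)) := by
      rw [hs1, add_eval, HS_eval a b p m hp (by omega) (2*p+2*m+2) (by omega) (by omega),
        if_neg (by omega), add_zero]
    rw [r1, r2, r3, r4, e1, e2, e3, e4]
    rw [show 2*p+2*(m+1) = 2*p+2*m+2 from by omega, show 2*p+2*m+2+1 = 2*p+2*m+3 from by omega,
      if_neg (Nat.succ_ne_zero m)]
    rw [← mul_assoc, ← mul_assoc, ← χ_add, ← χ_add]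
    congr 2
    have key0 : ∀ a b y xa xb xc xd : Fin 2,
        (b * (xb + a + xd) + a * (xa + b + xc)) + (b * y + b * xb)
          = b * y + (a * xa + a * xc + b * xd) := by decide
    have key1 : ∀ a b y z xa xb xc xd : Fin 2,
        (b * (xb + a + xd) + a * (xa + b + xc)) + (b * y + (a * z + a * xa + b * xb))
          = b * y + (a * z + a * xc + b * xd) := by decide
    by_cases hm0 : m = 0
    · subst hm0
      simp only [if_pos, reduceIte]
      rw [show 2*p+2*0 = 2*p from by omega, show 2*p+2*0+1 = 2*p+1 from by omega] at *
      exact key0 a b _ _ _ _ _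
    · simp only [if_neg hm0]
      exact key1 a b _ _ _ _ _ _

lemma clusterHS_full (a b : Fin 2) (p q : ℕ) (hp : 1 ≤ p) (hpq : p < q) (hq : 2*q ≤ n)
    (hn4 : 4 ≤ n) (s : Fin n → Fin 2) :
    cluster n ((s + HS n a b p (q-p-1)) + Pi.single (site n (2*q-1)) a)
      = χ (b * s (site n (2*p-1)) + a * s (site n (2*p)) + b * s (site n (2*q-1))
          + a * s (site n (2*q)) + a*b) * cluster n s := by
  have hn2 : 2 ≤ n := by omega
  set m := q - p - 1 with hmdef
  have hm2 : 2*p + 2*m + 2 = 2*q := by omega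
  set s1 := s + HS n a b p m with hs1
  rw [cluster_flip hn2, clusterHS_aux a b p m hp (by omega) s]
  have r1 : site n (2*q-1) - 1 = site n (2*q-2) := by
    rw [site_pred _ (by omega), show 2*q-1-1 = 2*q-2 from by omega]
  have r2 : site n (2*q-1) + 1 = site n (2*q) := by
    have h := site_succ (n := n) (2*q-1)
    rw [show 2*q-1+1 = 2*q from by omega] at h
    exact h.symm
  have e1 : s1 (site n (2*q-2)) = s (site n (2*q-2)) + b := by
    rw [hs1, add_eval, HS_eval a b p m hp (by omega) (2*q-2) (by omega) (by omega),
      if_pos (by omega), if_neg (by omega : ¬ (2*q-2) % 2 = 1)]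
  have e2 : s1 (site n (2*q)) = s (site n (2*q)) := by
    rw [hs1, add_eval, HS_eval a b p m hp (by omega) (2*q) (by omega) (by omega),
      if_neg (by omega), add_zero]
  rw [r1, r2, e1, e2, ← mul_assoc, ← χ_add]
  congr 2
  by_cases hm0 : m = 0
  · rw [if_pos hm0]
    rw [show 2*q-2 = 2*p from by omega, show 2*p+1 = 2*q-1 from by omega]
    have key0 : ∀ a b t u v w : Fin 2,
        a * ((u + b) + w) + (b * t + b * v) = b*t + a*u + b*v + a*w + a*b := by decide
    exact key0 a b _ _ _ _
  · rw [if_neg hm0]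
    rw [show 2*p+2*m = 2*q-2 from by omega, show 2*q-2+1 = 2*q-1 from by omega]
    have key1 : ∀ a b t u v w z : Fin 2,
        a * ((z + b) + w) + (b * t + (a * u + a * z + b * v))
          = b*t + a*u + b*v + a*w + a*b := by decide
    exact key1 a b _ _ _ _ _

lemma XX_shift (j k : ℕ) (z1 z2 : ZMod 2) (v : QState n) (s : Fin n → Fin 2) :
    (PX n j ^ z1.val * PX n k ^ z2.val).mulVec v s
      = v (s + (Pi.single (site n j) (zf z1) + Pi.single (site n k) (zf z2))) := by
  rw [← Matrix.mulVec_mulVec, PX_pow_mulVec, PX_pow_mulVec, ← add_assoc]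

lemma Usym_shift (h : G2) (v : QState n) (s : Fin n → Fin 2) :
    (Usym n h).mulVec v s = v (s + FU n (zf h.1) (zf h.2) (n/2)) := by
  unfold Usym FU
  exact prod_shift_mulVec _ _
    (fun p => Pi.single (site n (2*p+1)) (zf h.1) + Pi.single (site n (2*p+2)) (zf h.2))
    (fun p v s => XX_shift _ _ _ _ v s) v s

lemma Ustr_shift (g : G2) (p q : ℕ) (v : QState n) (s : Fin n → Fin 2) :
    (Ustr n p q g).mulVec v s
      = v (s + ((List.range (q-(p+1))).map
          (fun r => Pi.single (site n (2*(p+1+r)-1)) (zf g.1)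
            + Pi.single (site n (2*(p+1+r))) (zf g.2))).sum) := by
  unfold Ustr
  exact prod_shift_mulVec _ _ _ (fun r v s => XX_shift _ _ _ _ v s) v s

lemma VL_mulVec (g : G2) (p : ℕ) (v : QState n) (t : Fin n → Fin 2) :
    (VL n p g).mulVec v t
      = χ (zf g.2 * t (site n (2*p-1)))
        * (χ (zf g.1 * (t (site n (2*p)) + zf g.2))
          * v (t + Pi.single (site n (2*p)) (zf g.2))) := by
  unfold VL
  rw [← Matrix.mulVec_mulVec, PZ_pow_mulVec]
  congr 1
  rw [← Matrix.mulVec_mulVec, PX_pow_mulVec, PZ_pow_mulVec, addSingle_self]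

lemma VR_mulVec (g : G2) (q : ℕ) (hq1 : 1 ≤ q) (hq : 2*q ≤ n) (v : QState n)
    (s : Fin n → Fin 2) :
    (VR n q g).mulVec v s
      = χ (zf g.2 * s (site n (2*q-1)))
        * (χ (zf g.1 * s (site n (2*q)))
          * v (s + Pi.single (site n (2*q-1)) (zf g.1))) := by
  unfold VR
  rw [← Matrix.mulVec_mulVec, ← Matrix.mulVec_mulVec, PZ_pow_mulVec]
  congr 1
  rw [PX_pow_mulVec, PZ_pow_mulVec]
  rw [addSingle_ne s (zf g.1) (by
    rw [Ne, site_inj (2*q) (2*q-1) (by omega) (by omega) (by omega) (by omega)]; omega)]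

lemma TSOP_cluster (hn4 : 4 ≤ n) (hev : Even n) (g h : G2) (p q : ℕ)
    (hp : 1 ≤ p) (hpq : p < q) (hq : q ≤ n/2) :
    (TSOP n p q g h).mulVec (cluster n)
      = χ (zf g.1 * zf h.2 + zf g.2 * zf h.1) • cluster n := by
  have hn0 : 0 < n := by omega
  obtain ⟨K, hK⟩ := id hev
  have h2q : 2*q ≤ n := by
    have := Nat.div_mul_le_self n 2
    omega
  funext s
  unfold TSOP
  rw [← Matrix.mulVec_mulVec, ← Matrix.mulVec_mulVec, ← Matrix.mulVec_mulVec]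
  rw [VR_mulVec g q (by omega) h2q]
  rw [Usym_shift]
  rw [VL_mulVec]
  rw [Ustr_shift]
  -- abbreviations
  set c := zf h.1
  set d := zf h.2
  set a := zf g.1
  set b := zf g.2
  set S : Fin n → Fin 2 := ((List.range (q-(p+1))).map
          (fun r => Pi.single (site n (2*(p+1+r)-1)) a
            + Pi.single (site n (2*(p+1+r))) b)).sum with hS
  set F := FU n c d (n/2) with hF
  -- rearrange the argument of cluster
  have harg : ((((s + Pi.single (site n (2*q-1)) a) + F) + Pi.single (site n (2*p)) b) + S)
      = (((s + F) + HS n a b p (q-p-1)) + Pi.single (site n (2*q-1)) a) := by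
    rw [HS, hS, show q - (p+1) = q - p - 1 from by omega]
    abel
  rw [harg, clusterHS_full a b p q hp hpq h2q hn4, clusterFU_full hn4 hev]
  -- evaluate everything at s
  set t := (s + Pi.single (site n (2*q-1)) a) + F with ht
  have hFU : ∀ k, 1 ≤ k → k ≤ n →
      F (site n k) = if k % 2 = 1 then c else d := by
    intro k h1 h2
    rw [hF, FU_eval c d (n/2) (by omega) k h1 h2, if_pos (by omega)]
  have ev1 : t (site n (2*p-1)) = s (site n (2*p-1)) + c := by
    rw [ht, add_eval, add_eval, Pi.single_apply,
      if_neg (by rw [site_inj (2*p-1) (2*q-1) (by omega) (by omega) (by omega) (by omega)]; omega),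
      add_zero, hFU (2*p-1) (by omega) (by omega), if_pos (by omega)]
  have ev2 : t (site n (2*p)) = s (site n (2*p)) + d := by
    rw [ht, add_eval, add_eval, Pi.single_apply,
      if_neg (by rw [site_inj (2*p) (2*q-1) (by omega) (by omega) (by omega) (by omega)]; omega),
      add_zero, hFU (2*p) (by omega) (by omega), if_neg (by omega)]
  have ev3 : (s + F) (site n (2*p-1)) = s (site n (2*p-1)) + c := by
    rw [add_eval, hFU (2*p-1) (by omega) (by omega), if_pos (by omega)]
  have ev4 : (s + F) (site n (2*p)) = s (site n (2*p)) + d := by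
    rw [add_eval, hFU (2*p) (by omega) (by omega), if_neg (by omega)]
  have ev5 : (s + F) (site n (2*q-1)) = s (site n (2*q-1)) + c := by
    rw [add_eval, hFU (2*q-1) (by omega) (by omega), if_pos (by omega)]
  have ev6 : (s + F) (site n (2*q)) = s (site n (2*q)) + d := by
    rw [add_eval, hFU (2*q) (by omega) (by omega), if_neg (by omega)]
  rw [ev1, ev2, ev3, ev4, ev5, ev6]
  show _ = χ (a * d + b * c) * cluster n s
  rw [← mul_assoc, ← mul_assoc, ← mul_assoc, ← mul_assoc,
    ← χ_add, ← χ_add, ← χ_add, ← χ_add]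
  congr 2
  have key : ∀ a b c d x1 x2 x3 x4 : Fin 2,
      b*x3 + a*x4 + b*(x1+c) + a*((x2+d)+b)
        + (b*(x1+c) + a*(x2+d) + b*(x3+c) + a*(x4+d) + a*b) = a*d + b*c := by decide
  exact key a b c d _ _ _ _

lemma scalar_eq (g h : G2) :
    χ (zf g.1 * zf h.2 + zf g.2 * zf h.1)
      = (-1:ℂ)^(g.1.val * h.2.val + g.2.val * h.1.val) := by
  obtain ⟨g1, g2⟩ := g
  obtain ⟨h1, h2⟩ := h
  rcases zmod2_cases g1 with rfl | rfl <;> rcases zmod2_cases g2 with rfl | rfl <;>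
    rcases zmod2_cases h1 with rfl | rfl <;> rcases zmod2_cases h2 with rfl | rfl <;>
    norm_num [χ, zf, show (1 : ZMod 2).val = 1 from rfl, show (0 : ZMod 2).val = 0 from rfl] <;>
    norm_num [show ((2:Fin 2)).val = 0 from rfl] <;>
    simp [Fin.val_add, Fin.val_mul]

lemma scalar_neg1 (g h : G2) (hg : g ≠ 0) (hh : h ≠ 0) (hgh : g ≠ h) :
    χ (zf g.1 * zf h.2 + zf g.2 * zf h.1) = -1 := by
  obtain ⟨g1, g2⟩ := g
  obtain ⟨h1, h2⟩ := h
  rcases zmod2_cases g1 with rfl | rfl <;> rcases zmod2_cases g2 with rfl | rfl <;>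
    rcases zmod2_cases h1 with rfl | rfl <;> rcases zmod2_cases h2 with rfl | rfl <;>
    simp_all [χ, zf]

lemma trace_vecMulVec_mul (x y : QState n) (A : Op n) :
    (Matrix.vecMulVec x y * A).trace = ∑ t, y t * (A.mulVec x t) := by
  unfold Matrix.trace Matrix.vecMulVec
  simp only [Matrix.diag_apply, Matrix.mul_apply, Matrix.of_apply, Matrix.mulVec, dotProduct]
  rw [Finset.sum_comm]
  apply Finset.sum_congr rfl
  intro t _
  rw [Finset.mul_sum]
  apply Finset.sum_congr rfl
  intro s _
  ring

lemma cluster_norm (t : Fin n → Fin 2) :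
    star (cluster n t) * cluster n t = ((2:ℂ)⁻¹)^n := by
  rw [cluster_apply]
  set r := (((Real.sqrt 2)⁻¹ : ℝ) : ℂ) with hr
  have hχ : star (χ (Esum n t)) * χ (Esum n t) = 1 := by
    have h : ∀ e : Fin 2, star (χ e) * χ e = 1 := by
      intro e; fin_cases e <;> simp [χ]
    exact h _
  have hrs : star r = r := by simp [hr]
  have hrr : star r * r = (2:ℂ)⁻¹ := by
    rw [hrs, hr, ← Complex.ofReal_mul, ← mul_inv, Real.mul_self_sqrt (by norm_num : (0:ℝ) ≤ 2)]
    norm_num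
  calc star (χ (Esum n t) * r ^ n) * (χ (Esum n t) * r ^ n)
      = (star (χ (Esum n t)) * χ (Esum n t)) * (star (r^n) * r^n) := by
        rw [star_mul']; ring
    _ = star (r^n) * r^n := by rw [hχ, one_mul]
    _ = (star r * r)^n := by rw [star_pow, ← mul_pow]
    _ = ((2:ℂ)⁻¹)^n := by rw [hrr]

lemma cluster_normalized : ∑ t, star (cluster n t) * cluster n t = 1 := by
  rw [Finset.sum_congr rfl (fun t _ => cluster_norm t)]
  rw [Finset.sum_const, Finset.card_univ, Fintype.card_fun, Fintype.card_fin, Fintype.card_fin,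
    nsmul_eq_mul]
  push_cast
  rw [← mul_pow]
  norm_num


lemma Usym_cluster (hn4 : 4 ≤ n) (hev : Even n) (g : G2) :
    (Usym n g).mulVec (cluster n) = cluster n := by
  funext s
  rw [Usym_shift, clusterFU_full hn4 hev]

lemma Owin_cluster (hn4 : 4 ≤ n) (hev : Even n) (h6 : 6 ∣ n) (g h : G2)
    (hg : g ≠ 0) (hh : h ≠ 0) (hgh : g ≠ h) :
    (Owin n g h).mulVec (cluster n) = cluster n := by
  obtain ⟨k6, hk6⟩ := h6
  have hq1 : 1 < n/6 + 1 := by omega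
  have hq2 : n/6 + 1 ≤ n/2 := by omega
  have hT : (TSOP n 1 (n/6+1) g h).mulVec (cluster n) = (-1 : ℂ) • cluster n := by
    rw [TSOP_cluster hn4 hev g h 1 (n/6+1) le_rfl hq1 hq2, scalar_neg1 g h hg hh hgh]
  unfold Owin
  rw [Matrix.smul_mulVec, Matrix.sub_mulVec, Matrix.sub_mulVec,
    Matrix.add_mulVec, Matrix.add_mulVec, Matrix.add_mulVec,
    Matrix.smul_mulVec, Matrix.smul_mulVec, Matrix.smul_mulVec,
    Matrix.smul_mulVec, Matrix.one_mulVec,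
    Usym_cluster hn4 hev g, Usym_cluster hn4 hev h, Usym_cluster hn4 hev (g+h), hT,
    ← Matrix.mulVec_mulVec, hT, Matrix.mulVec_smul, Usym_cluster hn4 hev g]
  funext s
  simp only [Pi.smul_apply, Pi.add_apply, Pi.sub_apply, smul_eq_mul, nsmul_eq_mul,
    Pi.mul_apply, Pi.natCast_apply, Pi.neg_apply]
  push_cast
  ring

lemma winprob (hn4 : 4 ≤ n) (hev : Even n) (h6 : 6 ∣ n) (g h : G2)
    (hg : g ≠ 0) (hh : h ≠ 0) (hgh : g ≠ h) :
    (Matrix.vecMulVec (cluster n) (star (cluster n)) * Owin n g h).trace = 1 := by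
  rw [trace_vecMulVec_mul, Owin_cluster hn4 hev h6 g h hg hh hgh]
  calc ∑ t, (star (cluster n)) t * cluster n t
      = ∑ t, star (cluster n t) * cluster n t := by
        apply Finset.sum_congr rfl; intro t _; rw [Pi.star_apply]
    _ = 1 := cluster_normalized

end CP

/-- The twisted string order parameter acts on the cyclic cluster state by the twist phase
`(−1)^{ad−bc} = (−1)^{ad+bc}`; consequently, for `6 ∣ n` and distinct nontrivial `g, h`, the
cluster state wins the triangle game with certainty: `P_n^{(Q)}(g,h||C_n⟩⟨C_n|) = 1`. -/
theorem cluster_state_wins_with_certainty (n : ℕ) [NeZero n] (hn : Even n) (hn4 : 4 ≤ n) :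
    (∀ (g h : G2) (p q : ℕ), 1 ≤ p → p < q → q ≤ n / 2 →
      (TSOP n p q g h).mulVec (cluster n)
        = ((-1 : ℂ) ^ (g.1.val * h.2.val + g.2.val * h.1.val)) • cluster n) ∧
    (6 ∣ n → ∀ g h : G2, g ≠ 0 → h ≠ 0 → g ≠ h →
      (Matrix.vecMulVec (cluster n) (star (cluster n)) * Owin n g h).trace = 1) := by
  constructor
  · intro g h p q hp hpq hq
    rw [CP.TSOP_cluster hn4 hn g h p q hp hpq hq, CP.scalar_eq]
  · intro h6 g h hg hh hgh
    exact CP.winprob hn4 hn h6 g h hg hh hgh
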